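/- arXiv:1006.5730 — 2 statements merged into one kernel-verified Lean document; each statement's English description precedes it below -/
import Mathlib

section
/- For all nonnegative integers m, n with n ≤ m and all reals α, β, γ: G(m,n;α,β,γ) = Σ_{r=0}^{n} C(n,r) · C(m,n−r) · β^r · (αβ+γ)^{n−r} · α^{m−n+r}, where C(·,·) denotes the binomial coefficient. -/
open MeasureTheory ProbabilityTheory Filter

/-- `G m n α β γ = Σ_{r=0}^{min(m,n)} ((m+n−r)!/((m−r)!(n−r)!r!)) α^{m−r} β^{n−r} γ^r`. -/
noncomputable def G (m n : ℕ) (α β γ : ℝ) : ℝ :=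
  ∑ r ∈ Finset.range (min m n + 1),
    ((Nat.factorial (m + n - r) : ℝ) /
      ((Nat.factorial (m - r) : ℝ) * (Nat.factorial (n - r) : ℝ) * (Nat.factorial r : ℝ))) *
      α ^ (m - r) * β ^ (n - r) * γ ^ r

lemma vandermonde_range (m n k : ℕ) (hk : k ≤ n) :
    ∑ r ∈ Finset.range (n - k + 1), (n - k).choose r * m.choose (n - r)
      = (n - k + m).choose n := by
  rw [Finset.sum_subset (Finset.range_subset_range.2 (by omega) :
      Finset.range (n - k + 1) ⊆ Finset.range (n + 1))]
  · rw [Nat.add_choose_eq, Finset.Nat.sum_antidiagonal_eq_sum_range_succ_mk]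
  · intro r hr hr'
    have : n - k < r := by simp only [Finset.mem_range, not_lt] at hr hr' ⊢; omega
    rw [Nat.choose_eq_zero_of_lt this, Nat.zero_mul]

lemma choose_swap (n r k : ℕ) (h : r + k ≤ n) :
    n.choose r * (n - r).choose k = n.choose k * (n - k).choose r := by
  have h1 := Nat.choose_mul (n := n) (Nat.le_add_right r k)
  have h2 := Nat.choose_mul (n := n) (Nat.le_add_left k r)
  rw [Nat.add_sub_cancel_left] at h1
  rw [Nat.add_sub_cancel] at h2
  rw [← h1, ← h2, Nat.choose_symm_add]

lemma coeff_eq (m n k : ℕ) (hk : k ≤ n) (hnm : n ≤ m) :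
    ((Nat.factorial (m + n - k) : ℝ) /
      ((Nat.factorial (m - k) : ℝ) * (Nat.factorial (n - k) : ℝ) * (Nat.factorial k : ℝ)))
      = (n.choose k : ℝ) * ((n - k + m).choose n : ℝ) := by
  rw [div_eq_iff (by positivity)]
  have h1 : n.choose k * k.factorial * (n - k).factorial = n.factorial :=
    Nat.choose_mul_factorial_mul_factorial hk
  have h2 : (n - k + m).choose n * n.factorial * (m - k).factorial = (n - k + m).factorial := by
    have := Nat.choose_mul_factorial_mul_factorial (n := n - k + m) (k := n) (by omega)
    rwa [show n - k + m - n = m - k by omega] at this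
  have key : n.choose k * ((n - k + m).choose n) * ((m - k).factorial * (n - k).factorial
      * k.factorial) = (m + n - k).factorial := by
    rw [show m + n - k = n - k + m by omega, ← h2, ← h1]; ring
  exact_mod_cast congrArg (Nat.cast (R := ℝ)) key.symm

theorem G_binomial_form (m n : ℕ) (hnm : n ≤ m) (α β γ : ℝ) :
    G m n α β γ = ∑ r ∈ Finset.range (n + 1),
      (n.choose r : ℝ) * (m.choose (n - r) : ℝ) * β ^ r *
        (α * β + γ) ^ (n - r) * α ^ (m - n + r) := by
  rw [G, min_eq_right hnm]
  have expand : ∀ r ∈ Finset.range (n + 1),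
      (n.choose r : ℝ) * (m.choose (n - r) : ℝ) * β ^ r *
        (α * β + γ) ^ (n - r) * α ^ (m - n + r)
      = ∑ k ∈ Finset.range (n + 1),
          (n.choose r : ℝ) * (m.choose (n - r) : ℝ) * ((n - r).choose k : ℝ) *
            β ^ r * (α * β) ^ (n - r - k) * γ ^ k * α ^ (m - n + r) := by
    intro r hr
    calc (n.choose r : ℝ) * (m.choose (n - r) : ℝ) * β ^ r *
        (α * β + γ) ^ (n - r) * α ^ (m - n + r)
        = ∑ k ∈ Finset.range (n - r + 1),
            (n.choose r : ℝ) * (m.choose (n - r) : ℝ) * ((n - r).choose k : ℝ) *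
              β ^ r * (α * β) ^ (n - r - k) * γ ^ k * α ^ (m - n + r) := by
          rw [show α * β + γ = γ + α * β by ring, add_pow, Finset.mul_sum, Finset.sum_mul]
          exact Finset.sum_congr rfl fun k _ => by ring
      _ = ∑ k ∈ Finset.range (n + 1),
            (n.choose r : ℝ) * (m.choose (n - r) : ℝ) * ((n - r).choose k : ℝ) *
              β ^ r * (α * β) ^ (n - r - k) * γ ^ k * α ^ (m - n + r) := by
          refine Finset.sum_subset (Finset.range_subset_range.2 (by
            simp only [Finset.mem_range] at hr; omega)) fun k _ hk => ?_
          have : n - r < k := by simp only [Finset.mem_range, not_lt] at hk ⊢; omega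
          rw [Nat.choose_eq_zero_of_lt this]
          simp
  rw [Finset.sum_congr rfl expand, Finset.sum_comm]
  refine Finset.sum_congr rfl fun k hk => ?_
  have hkn : k ≤ n := by simpa [Nat.lt_succ_iff] using hk
  have shrink : ∑ r ∈ Finset.range (n + 1),
      (n.choose r : ℝ) * (m.choose (n - r) : ℝ) * ((n - r).choose k : ℝ) *
        β ^ r * (α * β) ^ (n - r - k) * γ ^ k * α ^ (m - n + r)
      = ∑ r ∈ Finset.range (n - k + 1),
          ((n.choose k : ℝ) * ((n - k).choose r : ℝ) * (m.choose (n - r) : ℝ)) *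
            (α ^ (m - k) * β ^ (n - k) * γ ^ k) := by
    rw [← Finset.sum_subset (Finset.range_subset_range.2 (by omega) :
        Finset.range (n - k + 1) ⊆ Finset.range (n + 1)) (fun r hrn hr => by
      have : n - r < k := by simp only [Finset.mem_range, not_lt] at hrn hr ⊢; omega
      rw [Nat.choose_eq_zero_of_lt this]; simp)]
    refine Finset.sum_congr rfl fun r hr => ?_
    have hr' : r ≤ n - k := by simpa [Nat.lt_succ_iff] using hr
    have hcc : (n.choose r : ℝ) * ((n - r).choose k : ℝ)
        = (n.choose k : ℝ) * ((n - k).choose r : ℝ) := by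
      exact_mod_cast congrArg (Nat.cast (R := ℝ)) (choose_swap n r k (by omega))
    have e1 : n - r - k + (m - n + r) = m - k := by omega
    have e2 : r + (n - r - k) = n - k := by omega
    calc (n.choose r : ℝ) * (m.choose (n - r) : ℝ) * ((n - r).choose k : ℝ) *
        β ^ r * (α * β) ^ (n - r - k) * γ ^ k * α ^ (m - n + r)
        = ((n.choose r : ℝ) * ((n - r).choose k : ℝ)) * (m.choose (n - r) : ℝ) *
            ((α ^ (n - r - k) * α ^ (m - n + r)) * (β ^ r * β ^ (n - r - k)) * γ ^ k) := by
          rw [mul_pow]; try ring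
      _ = ((n.choose k : ℝ) * ((n - k).choose r : ℝ) * (m.choose (n - r) : ℝ)) *
            (α ^ (m - k) * β ^ (n - k) * γ ^ k) := by
          rw [hcc, ← pow_add, ← pow_add, e1, e2]
  rw [shrink, ← Finset.sum_mul]
  have hsum : ∑ r ∈ Finset.range (n - k + 1),
      ((n.choose k : ℝ) * ((n - k).choose r : ℝ) * (m.choose (n - r) : ℝ))
      = (n.choose k : ℝ) * ((n - k + m).choose n : ℝ) := by
    have hN : ∑ r ∈ Finset.range (n - k + 1),
        n.choose k * ((n - k).choose r * m.choose (n - r))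
        = n.choose k * (n - k + m).choose n := by
      rw [← Finset.mul_sum, vandermonde_range m n k hkn]
    calc ∑ r ∈ Finset.range (n - k + 1),
        ((n.choose k : ℝ) * ((n - k).choose r : ℝ) * (m.choose (n - r) : ℝ))
        = ((∑ r ∈ Finset.range (n - k + 1),
            n.choose k * ((n - k).choose r * m.choose (n - r)) : ℕ) : ℝ) := by
          push_cast
          exact Finset.sum_congr rfl fun r _ => by ring
      _ = (n.choose k : ℝ) * ((n - k + m).choose n : ℝ) := by rw [hN]; push_cast; ring
  rw [hsum, coeff_eq m n k hkn hnm]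
  ring
end

section
/- Suppose the real parameters satisfy α = β = 0 and |γ| = 1. Then for all integers k, ℓ ≥ 0: Var(X_{k,ℓ}) = min(k,ℓ), and consequently for all fixed reals s, t > 0: lim_{n→∞} n^{−1} Var(Y^{(n)}(s,t)) = min(s,t). -/
open MeasureTheory ProbabilityTheory Filter

theorem variance_trivial_case
    {Ω : Type*} [MeasurableSpace Ω] (P : Measure Ω) [IsProbabilityMeasure P]
    (ε : ℕ → ℕ → Ω → ℝ)
    (hmeas : ∀ k ℓ : ℕ, Measurable (ε k ℓ))
    (hindep : iIndepFun
      (fun p : {p : ℕ × ℕ // 1 ≤ p.1 ∧ 1 ≤ p.2} => ε p.1.1 p.1.2) P)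
    (hmean : ∀ k ℓ : ℕ, 1 ≤ k → 1 ≤ ℓ → ∫ ω, ε k ℓ ω ∂P = 0)
    (hvar : ∀ k ℓ : ℕ, 1 ≤ k → 1 ≤ ℓ → variance (ε k ℓ) P = 1)
    (α β γ : ℝ)
    (X : ℕ → ℕ → Ω → ℝ)
    (hrec : ∀ k ℓ : ℕ, 1 ≤ k → 1 ≤ ℓ → ∀ ω : Ω,
      X k ℓ ω = α * X (k - 1) ℓ ω + β * X k (ℓ - 1) ω + γ * X (k - 1) (ℓ - 1) ω + ε k ℓ ω)
    (hbd1 : ∀ k : ℕ, ∀ ω : Ω, X k 0 ω = 0)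
    (hbd2 : ∀ ℓ : ℕ, ∀ ω : Ω, X 0 ℓ ω = 0)
    (hα : α = 0) (hβ : β = 0) (hγ : |γ| = 1) :
    (∀ k ℓ : ℕ, variance (X k ℓ) P = ((min k ℓ : ℕ) : ℝ)) ∧
    ∀ s t : ℝ, 0 < s → 0 < t →
      Tendsto (fun n : ℕ => ((n : ℝ))⁻¹ * variance (X ⌊(n : ℝ) * s⌋₊ ⌊(n : ℝ) * t⌋₊) P)
        atTop (nhds (min s t)) := by
  have hγ2 : γ ^ 2 = 1 := by
    have := sq_abs γ
    rw [hγ] at this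
    simpa using this.symm
  -- representation of X as a sum
  have hXrepr : ∀ k ℓ : ℕ, ∀ ω : Ω,
      X k ℓ ω = ∑ j ∈ Finset.range (min k ℓ), γ ^ j * ε (k - j) (ℓ - j) ω := by
    intro k
    induction k with
    | zero => intro ℓ ω; simp [hbd2]
    | succ k ih =>
      intro ℓ ω
      cases ℓ with
      | zero => simp [hbd1]
      | succ ℓ =>
        rw [hrec (k + 1) (ℓ + 1) (Nat.succ_le_succ k.zero_le) (Nat.succ_le_succ ℓ.zero_le) ω]
        simp only [hα, hβ, zero_mul, zero_add, Nat.add_sub_cancel]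
        rw [ih ℓ ω, Nat.succ_min_succ, Finset.sum_range_succ']
        simp only [Nat.succ_sub_succ, pow_zero, one_mul, Nat.sub_zero, Finset.mul_sum]
        congr 1
        apply Finset.sum_congr rfl
        intro j _
        ring
  -- Memℒp of the noise
  have hmem : ∀ k ℓ : ℕ, 1 ≤ k → 1 ≤ ℓ → MemLp (ε k ℓ) 2 P := by
    intro k ℓ hk hℓ
    rw [← evariance_lt_top_iff_memLp (hmeas k ℓ).aestronglyMeasurable]
    rw [lt_top_iff_ne_top]
    intro h
    have := hvar k ℓ hk hℓ
    rw [variance, h] at this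
    simp at this
  have hvarX : ∀ k ℓ : ℕ, variance (X k ℓ) P = ((min k ℓ : ℕ) : ℝ) := by
    intro k ℓ
    have hk1 : ∀ j ∈ Finset.range (min k ℓ), 1 ≤ k - j ∧ 1 ≤ ℓ - j := by
      intro j hj
      rw [Finset.mem_range] at hj
      omega
    have hXeq : X k ℓ = ∑ j ∈ Finset.range (min k ℓ), (fun ω => γ ^ j * ε (k - j) (ℓ - j) ω) := by
      funext ω
      rw [hXrepr k ℓ ω]
      simp
    rw [hXeq]
    rw [IndepFun.variance_sum]
    · have : ∀ j ∈ Finset.range (min k ℓ),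
          variance (fun ω => γ ^ j * ε (k - j) (ℓ - j) ω) P = 1 := by
        intro j hj
        obtain ⟨h1, h2⟩ := hk1 j hj
        rw [variance_const_mul, hvar _ _ h1 h2]
        rw [← pow_mul, mul_comm j 2, pow_mul, hγ2]
        simp
      rw [Finset.sum_congr rfl this]
      simp
    · intro j hj
      obtain ⟨h1, h2⟩ := hk1 j hj
      exact (hmem _ _ h1 h2).const_mul _
    · intro i hi j hj hij
      simp only [Finset.coe_range, Set.mem_Iio] at hi hj
      have hi' := hk1 i (Finset.mem_range.mpr hi)
      have hj' := hk1 j (Finset.mem_range.mpr hj)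
      have hne : (⟨(k - i, ℓ - i), hi'⟩ : {p : ℕ × ℕ // 1 ≤ p.1 ∧ 1 ≤ p.2}) ≠
          ⟨(k - j, ℓ - j), hj'⟩ := by
        intro h
        apply hij
        have := congrArg (fun q => q.val.1) h
        simp only at this
        omega
      have base := hindep.indepFun hne
      exact base.comp (measurable_const_mul (γ ^ i)) (measurable_const_mul (γ ^ j))
  refine ⟨hvarX, ?_⟩
  intro s t hs ht
  have hmin : 0 ≤ min s t := le_min hs.le ht.le
  have key : ∀ n : ℕ, ((n : ℝ))⁻¹ * variance (X ⌊(n : ℝ) * s⌋₊ ⌊(n : ℝ) * t⌋₊) P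
      = (⌊min s t * (n : ℝ)⌋₊ : ℝ) / (n : ℝ) := by
    intro n
    rw [hvarX]
    have h1 : min ⌊(n : ℝ) * s⌋₊ ⌊(n : ℝ) * t⌋₊ = ⌊min s t * (n : ℝ)⌋₊ := by
      have : min s t * (n : ℝ) = min ((n : ℝ) * s) ((n : ℝ) * t) := by
        rcases le_total s t with h | h
        · rw [min_eq_left h, min_eq_left (by nlinarith [Nat.cast_nonneg (α := ℝ) n] : (n:ℝ) * s ≤ (n:ℝ) * t)]; ring
        · rw [min_eq_right h, min_eq_right (by nlinarith [Nat.cast_nonneg (α := ℝ) n] : (n:ℝ) * t ≤ (n:ℝ) * s)]; ring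
      rw [this]
      exact (Nat.floor_mono.map_min).symm
    rw [h1, div_eq_inv_mul]
  simp only [key]
  exact (tendsto_nat_floor_mul_div_atTop hmin).comp tendsto_natCast_atTop_atTop
end
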